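/- arXiv:1611.03919 — 12 statements merged into one kernel-verified Lean document; each statement's English description precedes it below -/
import Mathlib

section
/- Let a, d ∈ ℕ with a ≥ 1 and gcd(a, d) ≥ 2 (i.e., a and d are not coprime). Then there exists x ∈ ℕ such that the trajectory O_{a,d}(x) does not loop, i.e., there do not exist N ∈ ℕ and k ≥ 1 with T_{a,d}^(N+k)(x) = T_{a,d}^(N)(x). -/
/-- The additive Collatz function `T_{a,d}`. -/
def addCollatz (a d : ℕ) (x : ℕ) : ℕ := if d ∣ x then x / d else x + a

theorem stmt_1 (a d : ℕ) (ha : 1 ≤ a) (hg : 2 ≤ Nat.gcd a d) :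
    ∃ x : ℕ, ¬ ∃ (N k : ℕ), 1 ≤ k ∧
      (addCollatz a d)^[N + k] x = (addCollatz a d)^[N] x := by
  have key : ∀ n : ℕ, (addCollatz a d)^[n] 1 = 1 + n * a := by
    intro n
    induction n with
    | zero => simp
    | succ n ih =>
      rw [Function.iterate_succ_apply', ih, addCollatz]
      have hnd : ¬ d ∣ (1 + n * a) := by
        intro hd
        have hgd : Nat.gcd a d ∣ 1 + n * a := (Nat.gcd_dvd_right a d).trans hd
        have hga : Nat.gcd a d ∣ n * a := Dvd.dvd.mul_left (Nat.gcd_dvd_left a d) n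
        have : Nat.gcd a d ∣ 1 := (Nat.dvd_add_right hga).mp (by rwa [add_comm] at hgd)
        have := Nat.le_of_dvd one_pos this; omega
      rw [if_neg hnd]; ring
  refine ⟨1, ?_⟩
  rintro ⟨N, k, hk, h⟩
  rw [key, key] at h
  have : k * a ≥ 1 := Nat.one_le_iff_ne_zero.mpr (by positivity)
  nlinarith
end

section
/- Let a, d ∈ ℕ with a ≥ 1, d ≥ 2, and gcd(a, d) = 1. Then for every x ∈ ℕ there exists N ∈ ℕ such that T_{a,d}^(N)(x) ≤ a. -/
theorem stmt_3 (a d : ℕ) (ha : 1 ≤ a) (hd : 2 ≤ d) (hcop : Nat.gcd a d = 1) :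
    ∀ x : ℕ, ∃ N : ℕ, (addCollatz a d)^[N] x ≤ a := by
  have hd0 : 0 < d := by omega
  intro x
  induction x using Nat.strong_induction_on with
  | _ x IH =>
  by_cases hxa : x ≤ a
  · exact ⟨0, hxa⟩
  push_neg at hxa
  have hx0 : 0 < x := by omega
  by_cases hdvd : d ∣ x
  · have hlt : x / d < x := Nat.div_lt_self hx0 (by omega)
    obtain ⟨N, hN⟩ := IH _ hlt
    refine ⟨N + 1, ?_⟩
    rw [Function.iterate_succ_apply]
    simpa [addCollatz, hdvd] using hN
  · -- find j < d with d ∣ x + j * a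
    haveI : NeZero d := ⟨by omega⟩
    have haunit : IsUnit (a : ZMod d) := by
      rw [ZMod.isUnit_iff_coprime]
      exact hcop
    have hex : ∃ j, j < d ∧ d ∣ x + j * a := by
      refine ⟨((-(x : ZMod d)) * (haunit.unit⁻¹ : (ZMod d)ˣ)).val, ZMod.val_lt _, ?_⟩
      have : ((x + ((-(x : ZMod d)) * (haunit.unit⁻¹ : (ZMod d)ˣ)).val * a : ℕ) : ZMod d) = 0 := by
        push_cast
        rw [ZMod.natCast_val, ZMod.cast_id]
        rw [mul_assoc, haunit.val_inv_mul]
        ring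
      exact (ZMod.natCast_eq_zero_iff _ _).mp this
    classical
    have hexP : ∃ j, d ∣ x + j * a := ⟨hex.choose, hex.choose_spec.2⟩
    set k := Nat.find hexP with hk
    have hkdvd : d ∣ x + k * a := Nat.find_spec hexP
    have hkmin : ∀ j < k, ¬ d ∣ x + j * a := fun j hj => Nat.find_min hexP hj
    have hkd : k < d := lt_of_le_of_lt (Nat.find_min' hexP hex.choose_spec.2) hex.choose_spec.1
    have hiter : ∀ m, (∀ j < m, ¬ d ∣ x + j * a) → (addCollatz a d)^[m] x = x + m * a := by
      intro m
      induction m with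
      | zero => simp
      | succ m ih =>
        intro h
        rw [Function.iterate_succ_apply', ih (fun j hj => h j (by omega))]
        have := h m (by omega)
        simp [addCollatz, this]
        ring
    have hkstep : (addCollatz a d)^[k + 1] x = (x + k * a) / d := by
      rw [Function.iterate_succ_apply', hiter k hkmin]
      simp [addCollatz, hkdvd]
    have hlt : (x + k * a) / d < x := by
      rw [Nat.div_lt_iff_lt_mul hd0]
      have : k * a ≤ (d - 1) * a := Nat.mul_le_mul_right a (by omega)
      have h2 : (d - 1) * a < (d - 1) * x :=
        Nat.mul_lt_mul_of_pos_left hxa (by omega : 0 < d - 1)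
      nlinarith [hxa, hd0]
    obtain ⟨N, hN⟩ := IH _ hlt
    refine ⟨N + (k + 1), ?_⟩
    rw [Function.iterate_add_apply, hkstep]
    exact hN
end

section
/- Let a, d ∈ ℕ with a ≥ 1, d ≥ 1, and gcd(a, d) = 1. If x ∈ ℕ satisfies x ≤ a, then for every k ∈ ℕ the iterate satisfies T_{a,d}^(k)(x) ≤ a·d. -/
theorem stmt_4 (a d x : ℕ) (ha : 1 ≤ a) (hd : 1 ≤ d) (hcop : Nat.gcd a d = 1)
    (hx : x ≤ a) : ∀ k : ℕ, (addCollatz a d)^[k] x ≤ a * d := by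
  have hd0 : d ≠ 0 := by omega
  haveI : NeZero d := ⟨hd0⟩
  have hc : Nat.Coprime a d := hcop
  set I : ℕ → Prop := fun y => ∃ j, j < d ∧ d ∣ y + j * a ∧ y + j * a ≤ a * d with hI
  have fresh : ∀ y : ℕ, y ≤ a → I y := by
    intro y hy
    set u : (ZMod d)ˣ := ZMod.unitOfCoprime a hc with hu
    refine ⟨((-y : ZMod d) * ↑u⁻¹).val, ZMod.val_lt _, ?_, ?_⟩
    · have h0 : ((y + ((-y : ZMod d) * ↑u⁻¹).val * a : ℕ) : ZMod d) = 0 := by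
        push_cast
        rw [ZMod.natCast_val, ZMod.cast_id]
        have hua : ((u : ZMod d)) = (a : ZMod d) := ZMod.coe_unitOfCoprime a hc
        rw [← hua]
        calc (y : ZMod d) + (-y : ZMod d) * ↑u⁻¹ * ↑u
            = (y : ZMod d) + (-y : ZMod d) * (↑u⁻¹ * ↑u) := by ring
          _ = 0 := by rw [Units.inv_mul]; ring
      exact (ZMod.natCast_eq_zero_iff _ _).mp h0
    · set j := ((-y : ZMod d) * ↑u⁻¹).val
      have hj : j + 1 ≤ d := ZMod.val_lt _
      calc y + j * a ≤ a + j * a := by omega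
        _ = (j + 1) * a := by ring
        _ ≤ d * a := Nat.mul_le_mul_right a hj
        _ = a * d := Nat.mul_comm d a
  have step : ∀ y : ℕ, I y → I (addCollatz a d y) := by
    intro y ⟨j, hjd, hdvd, hle⟩
    unfold addCollatz
    by_cases h : d ∣ y
    · simp only [h, if_true]
      apply fresh
      have hy : y ≤ a * d := le_trans (Nat.le_add_right _ _) hle
      calc y / d ≤ a * d / d := Nat.div_le_div_right hy
        _ = a := Nat.mul_div_cancel _ (by omega)
    · simp only [h, if_false]
      have hj0 : j ≠ 0 := by
        rintro rfl; simp at hdvd; exact h hdvd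
      obtain ⟨j', rfl⟩ : ∃ j', j = j' + 1 := ⟨j - 1, by omega⟩
      refine ⟨j', by omega, ?_, ?_⟩
      · have : y + a + j' * a = y + (j' + 1) * a := by ring
        rw [this]; exact hdvd
      · have : y + a + j' * a = y + (j' + 1) * a := by ring
        rw [this]; exact hle
  intro k
  have hIk : I ((addCollatz a d)^[k] x) := by
    induction k with
    | zero => exact fresh x hx
    | succ n ih =>
      rw [Function.iterate_succ_apply']
      exact step _ ih
  obtain ⟨j, _, _, hle⟩ := hIk
  exact le_trans (Nat.le_add_right _ _) hle
end

section
/- Let a, d ∈ ℕ with a ≥ 1, d ≥ 1, and gcd(a, d) = 1. If x ∈ ℕ satisfies x ≤ a, then the trajectory O_{a,d}(x) loops, i.e., there exist N ∈ ℕ and k ≥ 1 such that T_{a,d}^(N+k)(x) = T_{a,d}^(N)(x). -/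
lemma exists_add_mul_dvd (a d x : ℕ) (hd : 1 ≤ d) (hcop : Nat.gcd a d = 1) :
    ∃ j, j < d ∧ d ∣ x + j * a := by
  haveI : NeZero d := ⟨Nat.one_le_iff_ne_zero.mp hd⟩
  set u : (ZMod d)ˣ := ZMod.unitOfCoprime a hcop with hu
  refine ⟨(((u⁻¹ : (ZMod d)ˣ) : ZMod d) * (-(x : ZMod d))).val, ZMod.val_lt _, ?_⟩
  rw [← ZMod.natCast_eq_zero_iff]
  push_cast
  rw [ZMod.natCast_val, ZMod.cast_id]
  have h1 : ((u : ZMod d)) = (a : ZMod d) := rfl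
  calc (x : ZMod d) + (((u⁻¹ : (ZMod d)ˣ) : ZMod d) * (-(x : ZMod d))) * (a : ZMod d)
      = (x : ZMod d) + (-(x : ZMod d)) * (((u⁻¹ : (ZMod d)ˣ) : ZMod d) * (u : ZMod d)) := by
        rw [h1]; ring
    _ = 0 := by rw [u.inv_mul]; ring

theorem stmt_5 (a d x : ℕ) (ha : 1 ≤ a) (hd : 1 ≤ d) (hcop : Nat.gcd a d = 1)
    (hx : x ≤ a) :
    ∃ (N k : ℕ), 1 ≤ k ∧ (addCollatz a d)^[N + k] x = (addCollatz a d)^[N] x := by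
  set f := addCollatz a d with hf
  have hex : ∀ y : ℕ, ∃ j, d ∣ y + j * a := by
    intro y
    obtain ⟨j, _, h⟩ := exists_add_mul_dvd a d y hd hcop
    exact ⟨j, h⟩
  set c : ℕ → ℕ := fun y => Nat.find (hex y) with hc
  have hclt : ∀ y, c y < d := by
    intro y
    obtain ⟨j, hj, hdvd⟩ := exists_add_mul_dvd a d y hd hcop
    exact lt_of_le_of_lt (Nat.find_min' (hex y) hdvd) hj
  set φ : ℕ → ℕ := fun y => y + a * c y with hφdef
  obtain ⟨e, rfl⟩ : ∃ e, d = e + 1 := ⟨d - 1, by omega⟩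
  have hmul : a + a * e = a * (e + 1) := by ring
  have key : ∀ y, φ y ≤ a * (e + 1) → φ (f y) ≤ a * (e + 1) := by
    intro y hy
    by_cases hdy : (e + 1) ∣ y
    · have hfy : f y = y / (e + 1) := by simp [hf, addCollatz, hdy]
      rw [hfy]
      have hcy : c y = 0 := by
        have h0 : (e + 1) ∣ y + 0 * a := by simpa using hdy
        simpa [hc] using (Nat.find_eq_zero (hex y)).mpr h0
      have hyle : y ≤ a * (e + 1) := by
        have := hy
        simp only [hφdef, hcy, Nat.mul_zero, Nat.add_zero] at this
        exact this
      have h1 : y / (e + 1) ≤ a := by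
        calc y / (e + 1) ≤ a * (e + 1) / (e + 1) := Nat.div_le_div_right hyle
          _ = a := Nat.mul_div_cancel a (by omega)
      have h2 : c (y / (e + 1)) ≤ e := by have := hclt (y / (e + 1)); omega
      calc y / (e + 1) + a * c (y / (e + 1)) ≤ a + a * e :=
            Nat.add_le_add h1 (Nat.mul_le_mul_left a h2)
        _ = a * (e + 1) := hmul
    · have hfy : f y = y + a := by simp [hf, addCollatz, hdy]
      rw [hfy]
      have hstep : c y = c (y + a) + 1 := by
        rw [hc]
        rw [Nat.find_eq_iff]
        constructor
        · have h := Nat.find_spec (hex (y + a))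
          have heq : y + (Nat.find (hex (y + a)) + 1) * a = (y + a) + Nat.find (hex (y + a)) * a := by
            ring
          rw [heq]
          exact h
        · intro n hn
          match n with
          | 0 => simpa using hdy
          | Nat.succ k =>
            intro hcon
            have heq : y + (k + 1) * a = (y + a) + k * a := by ring
            rw [heq] at hcon
            exact Nat.find_min (hex (y + a)) (by simp only [hc] at hn; omega) hcon
      have hsame : φ (y + a) = φ y := by
        simp only [hφdef]
        rw [hstep]
        ring
      rw [hsame]; exact hy
  have hbound : ∀ n, f^[n] x ≤ a * (e + 1) := by
    have h0 : φ x ≤ a * (e + 1) := by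
      have hcx : c x ≤ e := by have := hclt x; omega
      calc φ x = x + a * c x := rfl
        _ ≤ a + a * e := Nat.add_le_add hx (Nat.mul_le_mul_left a hcx)
        _ = a * (e + 1) := hmul
    have hφn : ∀ n, φ (f^[n] x) ≤ a * (e + 1) := by
      intro n
      induction n with
      | zero => simpa using h0
      | succ n ih => rw [Function.iterate_succ_apply']; exact key _ ih
    intro n
    exact le_trans (Nat.le_add_right _ _) (hφn n)
  have hpig : ∃ m n : ℕ, m ≠ n ∧ f^[m] x = f^[n] x := by
    obtain ⟨m, n, hne, heq⟩ := Finite.exists_ne_map_eq_of_infinite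
      (fun n : ℕ => (⟨f^[n] x, Nat.lt_succ_of_le (hbound n)⟩ : Fin (a * (e + 1) + 1)))
    exact ⟨m, n, hne, by simpa using congrArg Fin.val heq⟩
  obtain ⟨m, n, hne, heq⟩ := hpig
  rcases hne.lt_or_gt with h | h
  · refine ⟨m, n - m, by omega, ?_⟩
    have : m + (n - m) = n := by omega
    rw [this, heq]
  · refine ⟨n, m - n, by omega, ?_⟩
    have : n + (m - n) = m := by omega
    rw [this, heq]
end

section
/- Let a, d ∈ ℕ with a ≥ 1, d ≥ 1, and gcd(a, d) = 1. Then for every x ∈ ℕ the trajectory O_{a,d}(x) loops, i.e., there exist N ∈ ℕ and k ≥ 1 such that T_{a,d}^(N+k)(x) = T_{a,d}^(N)(x). -/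
theorem stmt_7 (a d : ℕ) (ha : 1 ≤ a) (hd : 1 ≤ d) (hcop : Nat.gcd a d = 1) :
    ∀ x : ℕ, ∃ (N k : ℕ), 1 ≤ k ∧
      (addCollatz a d)^[N + k] x = (addCollatz a d)^[N] x := by
  intro x
  rcases eq_or_lt_of_le hd with h1 | hd2
  · -- d = 1
    refine ⟨0, 1, le_refl 1, ?_⟩
    simp [addCollatz, ← h1]
  · -- d ≥ 2
    haveI : NeZero d := ⟨by omega⟩
    have hwit : ∀ y : ℕ, d ∣ y + ((-(y : ZMod d)) * (a : ZMod d)⁻¹).val * a := by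
      intro y
      have h1 : ((a : ZMod d) * (a : ZMod d)⁻¹) = 1 := ZMod.coe_mul_inv_eq_one a hcop
      have h0 : ((y + ((-(y : ZMod d)) * (a : ZMod d)⁻¹).val * a : ℕ) : ZMod d) = 0 := by
        push_cast
        rw [ZMod.natCast_val, ZMod.cast_id]
        linear_combination (-(y : ZMod d)) * h1
      exact (ZMod.natCast_eq_zero_iff _ _).mp h0
    have hex : ∀ y : ℕ, ∃ i, d ∣ y + i * a := fun y => ⟨_, hwit y⟩
    set r : ℕ → ℕ := fun y => Nat.find (hex y) with hr
    have hrspec : ∀ y, d ∣ y + r y * a := fun y => Nat.find_spec (hex y)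
    have hrlt : ∀ y, r y < d := fun y =>
      lt_of_le_of_lt (Nat.find_le (hwit y)) (ZMod.val_lt _)
    have hr0 : ∀ y, d ∣ y → r y = 0 := by
      intro y hy
      have : r y ≤ 0 := Nat.find_le (by simpa using hy)
      omega
    have hstep : ∀ y, ¬ d ∣ y → r y = r (y + a) + 1 := by
      intro y hy
      have hpos : r y ≠ 0 := by
        intro h0
        apply hy
        have := hrspec y
        rw [h0] at this
        simpa using this
      obtain ⟨m, hm⟩ := Nat.exists_eq_succ_of_ne_zero hpos
      have le1 : r (y + a) ≤ m := by
        apply Nat.find_le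
        have := hrspec y
        rw [hm] at this
        have heq : (y + a) + m * a = y + (m + 1) * a := by ring
        rw [heq]
        exact this
      have le2 : r y ≤ r (y + a) + 1 := by
        apply Nat.find_le
        have := hrspec (y + a)
        have heq : y + (r (y + a) + 1) * a = (y + a) + r (y + a) * a := by ring
        rw [heq]
        exact this
      omega
    set T := addCollatz a d with hT
    set B := x + 2 * a * d with hB
    have hone : ∀ y, y + a * r y ≤ B → T y + a * r (T y) ≤ B := by
      intro y hy
      by_cases hdy : d ∣ y
      · have hTy : T y = y / d := by simp [hT, addCollatz, hdy]
        have h2 : y / d ≤ B / 2 := by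
          calc y / d ≤ y / 2 := Nat.div_le_div_left hd2 (by omega)
          _ ≤ B / 2 := Nat.div_le_div_right (by omega)
        have h3 : a * r (y / d) ≤ a * d := Nat.mul_le_mul_left a (le_of_lt (hrlt _))
        rw [hTy]
        have hm : B = x + 2 * (a * d) := by rw [hB]; ring
        omega
      · have hTy : T y = y + a := by simp [hT, addCollatz, hdy]
        rw [hTy]
        have heq : y + a + a * r (y + a) = y + a * r y := by
          rw [hstep y hdy]; ring
        omega
    have hinv : ∀ n, T^[n] x + a * r (T^[n] x) ≤ B := by
      intro n
      induction n with
      | zero =>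
        simp only [Function.iterate_zero, id]
        have := hrlt x
        have hm : B = x + 2 * (a * d) := by rw [hB]; ring
        have h3 : a * r x ≤ a * d := Nat.mul_le_mul_left a (le_of_lt (hrlt _))
        omega
      | succ n ih =>
        rw [Function.iterate_succ_apply']
        exact hone _ ih
    have hbdd : ∀ n, T^[n] x < B + 1 := by
      intro n
      have := hinv n
      omega
    obtain ⟨m, n, hmn, hfeq⟩ := Finite.exists_ne_map_eq_of_infinite
      (fun n : ℕ => (⟨T^[n] x, hbdd n⟩ : Fin (B + 1)))
    have hval : T^[m] x = T^[n] x := by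
      simpa using congrArg Fin.val hfeq
    rcases lt_or_gt_of_ne hmn with hlt | hlt
    · exact ⟨m, n - m, by omega, by rw [show m + (n - m) = n by omega]; exact hval.symm⟩
    · exact ⟨n, m - n, by omega, by rw [show n + (m - n) = m by omega]; exact hval⟩
end

section
/- Let a, d ∈ ℕ with a ≥ 1, d ≥ 2, and gcd(a, d) = 1. Then for every x ∈ ℕ there exists y ∈ ℕ with y ≤ a such that x and y are orbit equivalent, i.e., there exist n₁, n₂ ∈ ℕ such that for all k ∈ ℕ, T_{a,d}^(k+n₁)(x) = T_{a,d}^(k+n₂)(y). -/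
lemma addCollatz_drop (a d : ℕ) (ha : 1 ≤ a) (hd : 2 ≤ d) (hcop : Nat.gcd a d = 1)
    (x : ℕ) (hx : a < x) : ∃ m, (addCollatz a d)^[m] x < x := by
  have hd0 : 0 < d := by omega
  haveI : NeZero d := ⟨by omega⟩
  -- there exists j with d ∣ x + j * a
  have hex : ∃ j : ℕ, d ∣ x + j * a := by
    have hu : IsUnit (a : ZMod d) := by
      rw [ZMod.isUnit_iff_coprime]
      exact hcop
    obtain ⟨u, hu⟩ := hu
    refine ⟨((-(x : ZMod d)) * (↑u⁻¹ : ZMod d)).val, ?_⟩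
    have : ((x + ((-(x : ZMod d)) * (↑u⁻¹ : ZMod d)).val * a : ℕ) : ZMod d) = 0 := by
      push_cast
      rw [ZMod.natCast_val, ZMod.cast_id]
      rw [← hu]
      have : ((-(x : ZMod d)) * (↑u⁻¹ : ZMod d)) * ↑u = -(x : ZMod d) := by
        rw [mul_assoc]
        simp
      rw [this]; ring
    exact (ZMod.natCast_eq_zero_iff _ _).mp this
  classical
  let j := Nat.find hex
  have hj : d ∣ x + j * a := Nat.find_spec hex
  have hjmin : ∀ i < j, ¬ d ∣ x + i * a := fun i hi => Nat.find_min hex hi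
  -- bound j < d
  have hjd : j < d := by
    by_contra h
    push_neg at h
    have hjd' : d ∣ x + (j - d) * a := by
      have e : x + j * a = (x + (j - d) * a) + d * a := by
        have e2 : j = (j - d) + d := by omega
        calc x + j * a = x + ((j - d) + d) * a := by rw [← e2]
          _ = (x + (j - d) * a) + d * a := by ring
      rw [e] at hj
      exact (Nat.dvd_add_right (Dvd.intro a rfl)).mp (by rwa [add_comm] at hj)
    exact hjmin (j - d) (by omega) hjd'
  -- iterates up to j just add a
  have hiter : ∀ i ≤ j, (addCollatz a d)^[i] x = x + i * a := by
    intro i hi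
    induction i with
    | zero => simp
    | succ n ih =>
      rw [Function.iterate_succ_apply', ih (by omega)]
      unfold addCollatz
      rw [if_neg (hjmin n (by omega))]
      ring
  refine ⟨j + 1, ?_⟩
  rw [Function.iterate_succ_apply', hiter j le_rfl]
  unfold addCollatz
  rw [if_pos hj]
  rw [Nat.div_lt_iff_lt_mul hd0]
  nlinarith

theorem stmt_9 (a d : ℕ) (ha : 1 ≤ a) (hd : 2 ≤ d) (hcop : Nat.gcd a d = 1) :
    ∀ x : ℕ, ∃ y : ℕ, y ≤ a ∧ ∃ (n₁ n₂ : ℕ), ∀ k : ℕ,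
      (addCollatz a d)^[k + n₁] x = (addCollatz a d)^[k + n₂] y := by
  intro x
  induction x using Nat.strong_induction_on with
  | _ x ih =>
    by_cases hx : x ≤ a
    · exact ⟨x, hx, 0, 0, fun k => rfl⟩
    · push_neg at hx
      obtain ⟨m, hm⟩ := addCollatz_drop a d ha hd hcop x hx
      obtain ⟨y, hy, n₁, n₂, h⟩ := ih _ hm
      refine ⟨y, hy, n₁ + m, n₂, fun k => ?_⟩
      have e : k + (n₁ + m) = (k + n₁) + m := by omega
      rw [e, Function.iterate_add_apply]
      exact h k
end

section
/- Let a ∈ ℕ with a ≥ 1 and let d ∈ ℕ be coprime to a. Let H be the subgroup of the unit group (ℤ/aℤ)* generated by (the residue class of) d, acting on ℤ/aℤ by multiplication. Then for every x ∈ ℤ/aℤ, the cardinality of the stabilizer of x in H equals |H| / α_{p}(d), where p = a / gcd(x̃, a), x̃ ∈ {0,…,a−1} is the canonical representative of x, and α_p(d) is the multiplicative order of d modulo p. -/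
theorem stmt_10 (a d : ℕ) (ha : 1 ≤ a) (hcop : Nat.Coprime d a)
    (H : Subgroup (ZMod a)ˣ) (hH : H = Subgroup.zpowers (ZMod.unitOfCoprime d hcop))
    (x : ZMod a) :
    Nat.card (MulAction.stabilizer H x)
      = Nat.card H / orderOf ((d : ZMod (a / Nat.gcd x.val a))) := by
  haveI : NeZero a := ⟨by omega⟩
  subst hH
  set u := ZMod.unitOfCoprime d hcop with hu
  set p := a / Nat.gcd x.val a with hp
  set m := orderOf ((d : ZMod p)) with hm
  have hpdvd : p ∣ a := Nat.div_dvd_of_dvd (Nat.gcd_dvd_right _ _)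
  have hun : ((u : (ZMod a)ˣ) : ZMod a) = (d : ZMod a) := ZMod.coe_unitOfCoprime d hcop
  -- additive order of x is p
  have hord : addOrderOf x = p := by
    have h1 := ZMod.addOrderOf_coe x.val (n := a) (by omega)
    rw [ZMod.natCast_val, ZMod.cast_id] at h1
    rw [h1, hp, Nat.gcd_comm]
  have L1 : ∀ c : ℕ, ((c : ZMod a) * x = x ↔ ((c : ZMod p) = 1)) := by
    intro c
    have h1 : (c : ZMod a) * x = x ↔ ((c : ℤ) - 1) • x = 0 := by
      rw [sub_smul, one_smul, sub_eq_zero, zsmul_eq_mul]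
      push_cast
      rfl
    rw [h1, ← addOrderOf_dvd_iff_zsmul_eq_zero, hord,
      ← ZMod.intCast_zmod_eq_zero_iff_dvd]
    push_cast
    rw [sub_eq_zero]
  have L2 : ∀ k : ℕ, ((d : ZMod a) ^ k * x = x ↔ m ∣ k) := by
    intro k
    rw [← Nat.cast_pow, L1, Nat.cast_pow, hm, orderOf_dvd_iff_pow_eq_one]
  -- m divides the order of u
  have hmn : m ∣ orderOf u := by
    rw [hm, orderOf_dvd_iff_pow_eq_one]
    have h1 : ((d : ZMod a)) ^ orderOf u = 1 := by
      rw [← hun, ← Units.val_pow_eq_pow_val, pow_orderOf_eq_one, Units.val_one]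
    have h3 : ((d ^ orderOf u : ℕ) : ZMod a) = ((1 : ℕ) : ZMod a) := by
      push_cast; exact h1
    have h4 : ((d ^ orderOf u : ℕ) : ZMod p) = ((1 : ℕ) : ZMod p) := by
      rw [ZMod.natCast_eq_natCast_iff] at h3 ⊢
      exact h3.of_dvd hpdvd
    push_cast at h4
    exact h4
  set w : (Subgroup.zpowers u) := ⟨u, Subgroup.mem_zpowers u⟩ with hw
  have hwval : ∀ k : ℕ, ((w ^ k : Subgroup.zpowers u) : (ZMod a)ˣ) = u ^ k := by
    intro k; rfl
  have hsmul : ∀ g : Subgroup.zpowers u, g • x = ((g : (ZMod a)ˣ) : ZMod a) * x := by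
    intro g; rfl
  have key : MulAction.stabilizer (Subgroup.zpowers u) x = Subgroup.zpowers (w ^ m) := by
    ext g
    rw [MulAction.mem_stabilizer_iff]
    constructor
    · intro hg
      obtain ⟨k, hk⟩ := (Submonoid.mem_powers_iff _ _).mp
        (mem_powers_iff_mem_zpowers.mpr g.2)
      have hgx : (d : ZMod a) ^ k * x = x := by
        rw [hsmul] at hg
        rw [← hun, ← Units.val_pow_eq_pow_val, hk, hg]
      obtain ⟨j, hj⟩ := (L2 k).mp hgx
      rw [← mem_powers_iff_mem_zpowers]
      refine ⟨j, ?_⟩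
      apply Subtype.ext
      show (((w ^ m) ^ j : Subgroup.zpowers u) : (ZMod a)ˣ) = g
      rw [← pow_mul, hwval, ← hj, hk]
    · intro hg
      obtain ⟨j, hj⟩ := (Submonoid.mem_powers_iff _ _).mp
        (mem_powers_iff_mem_zpowers.mpr hg)
      have hv : (((w ^ m) ^ j : Subgroup.zpowers u) : (ZMod a)ˣ) = u ^ (m * j) := by
        rw [← pow_mul]; exact hwval _
      have h5 : ((u ^ (m * j) : (ZMod a)ˣ) : ZMod a) = (d : ZMod a) ^ (m * j) := by
        rw [← hun, Units.val_pow_eq_pow_val]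
      rw [hsmul, ← hj, hv, h5]
      exact (L2 _).mpr ⟨j, rfl⟩
  rw [key, Nat.card_zpowers, Nat.card_zpowers]
  have horder : orderOf (w ^ m) = orderOf (u ^ m) := by
    rw [← orderOf_injective (Subgroup.zpowers u).subtype (Subgroup.subtype_injective _) (w ^ m)]
    rfl
  rw [horder, orderOf_pow, Nat.gcd_eq_right hmn]
end

section
/- Let a ∈ ℕ with a ≥ 1 and let d ∈ ℕ be coprime to a. Let ξ(a,d) denote the number of orbits of the action on ℤ/aℤ of the subgroup of (ℤ/aℤ)* generated by d. Then ξ(a,d) = Σ_{f ∣ a} φ(f) / α_f(d), where the sum is over the positive divisors f of a, φ is Euler's totient function, and each division φ(f)/α_f(d) is exact (α_f(d) divides φ(f)). -/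
open Finset MulAction Function

theorem stmt_11 (a d : ℕ) (ha : 1 ≤ a) (hcop : Nat.Coprime d a) :
    (∀ f ∈ a.divisors, orderOf ((d : ZMod f)) ∣ Nat.totient f) ∧
    Nat.card (MulAction.orbitRel.Quotient
        (Subgroup.zpowers (ZMod.unitOfCoprime d hcop)) (ZMod a))
      = ∑ f ∈ a.divisors, Nat.totient f / orderOf ((d : ZMod f)) := by
  classical
  haveI : NeZero a := ⟨by omega⟩
  have hunit : ∀ f ∈ a.divisors, ∀ (hcf : Nat.Coprime d f),
      orderOf ((d : ZMod f)) = orderOf (ZMod.unitOfCoprime d hcf) := by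
    intro f hf hcf
    rw [← orderOf_units, ZMod.coe_unitOfCoprime]
  have h1 : ∀ f ∈ a.divisors, orderOf ((d : ZMod f)) ∣ Nat.totient f := by
    intro f hf
    haveI : NeZero f := ⟨(Nat.pos_of_mem_divisors hf).ne'⟩
    have hcf : Nat.Coprime d f := hcop.coprime_dvd_right (Nat.dvd_of_mem_divisors hf)
    rw [hunit f hf hcf, ← ZMod.card_units_eq_totient]
    exact orderOf_dvd_card
  have hpos : ∀ f ∈ a.divisors, 0 < orderOf ((d : ZMod f)) := by
    intro f hf
    haveI : NeZero f := ⟨(Nat.pos_of_mem_divisors hf).ne'⟩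
    have hcf : Nat.Coprime d f := hcop.coprime_dvd_right (Nat.dvd_of_mem_divisors hf)
    rw [hunit f hf hcf]
    exact orderOf_pos _
  refine ⟨h1, ?_⟩
  set u : (ZMod a)ˣ := ZMod.unitOfCoprime d hcop with hu
  set H := Subgroup.zpowers u with hH
  have hdvd : ∀ (v : (ZMod a)ˣ) (x : ZMod a),
      addOrderOf ((v : ZMod a) * x) ∣ addOrderOf x := by
    intro v x
    rw [addOrderOf_dvd_iff_nsmul_eq_zero, nsmul_eq_mul, mul_left_comm, ← nsmul_eq_mul,
      addOrderOf_nsmul_eq_zero, mul_zero]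
  have hinv : ∀ (v : (ZMod a)ˣ) (x : ZMod a),
      addOrderOf ((v : ZMod a) * x) = addOrderOf x := by
    intro v x
    refine Nat.dvd_antisymm (hdvd v x) ?_
    have := hdvd v⁻¹ ((v : ZMod a) * x)
    rwa [← mul_assoc, Units.inv_mul, one_mul] at this
  have hlift : ∀ (x y : ZMod a), MulAction.orbitRel H (ZMod a) x y →
      addOrderOf x = addOrderOf y := by
    intro x y hxy
    rw [MulAction.orbitRel_apply] at hxy
    obtain ⟨g, rfl⟩ := hxy
    show addOrderOf ((g : ↥H) • y) = addOrderOf y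
    have hg : (g : ↥H) • y = ((g : (ZMod a)ˣ) : ZMod a) * y := rfl
    rw [hg]
    exact hinv _ _
  let F : MulAction.orbitRel.Quotient H (ZMod a) → ℕ :=
    Quotient.lift addOrderOf hlift
  have hFmk : ∀ x : ZMod a, F (Quotient.mk'' x) = addOrderOf x := fun _ => rfl
  haveI : Fintype (MulAction.orbitRel.Quotient H (ZMod a)) := Fintype.ofFinite _
  have hFmem : ∀ ω : MulAction.orbitRel.Quotient H (ZMod a), F ω ∈ a.divisors := by
    intro ω
    induction ω using Quotient.inductionOn' with
    | h x =>
      rw [hFmk]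
      refine Nat.mem_divisors.mpr ⟨?_, (NeZero.ne a)⟩
      have := addOrderOf_dvd_card (x := x)
      rwa [ZMod.card] at this
  rw [Nat.card_eq_fintype_card, ← Finset.card_univ,
    Finset.card_eq_sum_card_fiberwise (f := F) (t := a.divisors) (fun ω _ => hFmem ω)]
  refine Finset.sum_congr rfl ?_
  intro f hf
  haveI : NeZero f := ⟨(Nat.pos_of_mem_divisors hf).ne'⟩
  have hcf : Nat.Coprime d f := hcop.coprime_dvd_right (Nat.dvd_of_mem_divisors hf)
  set m := orderOf ((d : ZMod f)) with hm
  -- each orbit in the fiber has size m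
  have horb : ∀ ω ∈ ({ω ∈ univ | F ω = f} : Finset _),
      #({x ∈ (univ : Finset (ZMod a)) | Quotient.mk'' x = ω} : Finset _) = m := by
    intro ω hω
    rw [Finset.mem_filter] at hω
    set y := Quotient.out ω with hy
    have hmky : (Quotient.mk'' y : MulAction.orbitRel.Quotient H (ZMod a)) = ω :=
      Quotient.out_eq' ω
    have hay : addOrderOf y = f := by rw [← hFmk y, hmky]; exact hω.2
    have hcard : #({x ∈ (univ : Finset (ZMod a)) | Quotient.mk'' x = ω} : Finset _)
        = Nat.card (MulAction.orbit H y) := by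
      rw [← Fintype.card_subtype, ← Nat.card_eq_fintype_card]
      refine Nat.card_congr (Equiv.subtypeEquivRight ?_)
      intro x
      rw [← hmky, Quotient.eq'']
      exact MulAction.orbitRel_apply (G := H)
    rw [hcard, hH, Nat.card_congr (MulAction.orbitZPowersEquiv u y), Nat.card_zmod]
    have hper : ∀ n : ℕ, Function.IsPeriodicPt (u • ·) n y ↔ m ∣ n := by
      intro n
      rw [Function.IsPeriodicPt, Function.IsFixedPt, smul_iterate_apply]
      have h1 : u ^ n • y = ((d ^ n : ℕ) : ZMod a) * y := by
        rw [Units.smul_def, Units.val_pow_eq_pow_val, hu, ZMod.coe_unitOfCoprime, Nat.cast_pow]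
        rw [smul_eq_mul]
      rw [h1, ← nsmul_eq_mul, hm, orderOf_dvd_iff_pow_eq_one]
      have h2 : ((d : ZMod f)) ^ n = 1 ↔ (d ^ n) ≡ 1 [MOD f] := by
        rw [← Nat.cast_pow, ← Nat.cast_one, ZMod.natCast_eq_natCast_iff]
      rw [h2]
      have h3 : (d ^ n) • y = y ↔ (d ^ n) ≡ 1 [MOD addOrderOf y] := by
        constructor
        · intro h
          exact nsmul_eq_nsmul_iff_modEq.mp (h.trans (one_nsmul y).symm)
        · intro h
          have : (d ^ n) • y = 1 • y := nsmul_eq_nsmul_iff_modEq.mpr h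
          rwa [one_nsmul] at this
      rw [h3, hay]
    have hdvd1 : Function.minimalPeriod (u • ·) y ∣ m :=
      Function.IsPeriodicPt.minimalPeriod_dvd ((hper m).mpr dvd_rfl)
    have hdvd2 : m ∣ Function.minimalPeriod (u • ·) y :=
      (hper _).mp (Function.isPeriodicPt_minimalPeriod _ _)
    exact Nat.dvd_antisymm hdvd1 hdvd2
  have htot : #({x ∈ (univ : Finset (ZMod a)) | addOrderOf x = f} : Finset _)
      = Nat.totient f := by
    have hdvd : f ∣ Fintype.card (ZMod a) := by
      rw [ZMod.card]; exact Nat.dvd_of_mem_divisors hf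
    have := IsAddCyclic.card_addOrderOf_eq_totient (α := ZMod a) hdvd
    convert this using 2
  have hsum := Finset.card_eq_sum_card_fiberwise
    (s := ({x ∈ (univ : Finset (ZMod a)) | addOrderOf x = f} : Finset _))
    (t := ({ω ∈ univ | F ω = f} : Finset _))
    (f := fun x => (Quotient.mk'' x : MulAction.orbitRel.Quotient H (ZMod a)))
    (by
      intro x hx
      rw [Finset.mem_coe, Finset.mem_filter] at hx
      rw [Finset.mem_coe, Finset.mem_filter]
      exact ⟨Finset.mem_univ _, (hFmk x).trans hx.2⟩)
  have hfib : ∀ ω ∈ ({ω ∈ univ | F ω = f} : Finset _),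
      #({x ∈ ({x ∈ (univ : Finset (ZMod a)) | addOrderOf x = f} : Finset _) |
          Quotient.mk'' x = ω} : Finset _)
        = #({x ∈ (univ : Finset (ZMod a)) | Quotient.mk'' x = ω} : Finset _) := by
    intro ω hω
    rw [Finset.mem_filter] at hω
    congr 1
    rw [Finset.filter_filter]
    apply Finset.filter_congr
    intro x _
    constructor
    · rintro ⟨_, h⟩; exact h
    · intro h
      refine ⟨?_, h⟩
      rw [← hFmk x, h]
      exact hω.2
  rw [Finset.sum_congr rfl hfib, Finset.sum_congr rfl horb, Finset.sum_const, smul_eq_mul] at hsum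
  rw [htot] at hsum
  rw [hsum, Nat.mul_div_cancel _ (hpos f hf)]
end

section
/- Let a ∈ ℕ with a ≥ 1 and let d ∈ ℕ be coprime to a. Let ξ(a,d) denote the number of orbits of the action on ℤ/aℤ of the subgroup of (ℤ/aℤ)* generated by d. Then, as rational numbers, ξ(a,d) ≥ Σ_{f ∣ a} φ(f) / λ(f), where the sum is over the positive divisors f of a, φ is Euler's totient function, and λ(f) is the exponent of the group (ℤ/fℤ)* (the Carmichael function). -/
open MulAction Function Finset

/-- Auxiliary: the multiplication-by-`d` map on `ZMod a` has period dividing the exponent of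
`(ZMod (addOrderOf x))ˣ` at `x`. -/
lemma aux_period_dvd (a d : ℕ) (ha : 1 ≤ a) (hcop : Nat.Coprime d a) (hd : 0 < d)
    (x : ZMod a) :
    Function.minimalPeriod ((ZMod.unitOfCoprime d hcop) • ·) x ∣
      Monoid.exponent (ZMod (addOrderOf x))ˣ := by
  haveI : NeZero a := ⟨by omega⟩
  set f := addOrderOf x with hf
  set m := Monoid.exponent (ZMod f)ˣ with hm
  have hfa : f ∣ a := by
    simpa [ZMod.card a] using addOrderOf_dvd_card (x := x)
  have hcf : Nat.Coprime d f := Nat.Coprime.coprime_dvd_right hfa hcop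
  -- d ^ m ≡ 1 [MOD f]
  have hmod : d ^ m ≡ 1 [MOD f] := by
    have h1 : (ZMod.unitOfCoprime d hcf) ^ m = 1 := Monoid.pow_exponent_eq_one _
    have h2 : ((d : ZMod f)) ^ m = 1 := by
      have := congrArg (Units.val) h1
      simpa [ZMod.coe_unitOfCoprime] using this
    have h3 : ((d ^ m : ℕ) : ZMod f) = ((1 : ℕ) : ZMod f) := by push_cast; simpa using h2
    exact (ZMod.natCast_eq_natCast_iff _ _ _).mp h3
  have hdm1 : 1 ≤ d ^ m := Nat.one_le_pow _ _ hd
  have hdvd : f ∣ d ^ m - 1 := (Nat.modEq_iff_dvd' hdm1).mp hmod.symm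
  -- hence (d^m) • x = x
  have hsmul : (d ^ m) • x = x := by
    have h0 : (d ^ m - 1) • x = 0 := by
      rw [← addOrderOf_dvd_iff_nsmul_eq_zero]
      exact hdvd
    have : d ^ m = (d ^ m - 1) + 1 := by omega
    rw [this, add_nsmul, h0, one_nsmul, zero_add]
  -- conclude via periodic point
  have hper : Function.IsPeriodicPt ((ZMod.unitOfCoprime d hcop) • ·) m x := by
    show ((ZMod.unitOfCoprime d hcop) • ·)^[m] x = x
    rw [smul_iterate]
    show ((ZMod.unitOfCoprime d hcop) ^ m) • x = x
    rw [Units.smul_def, Units.val_pow_eq_pow_val, ZMod.coe_unitOfCoprime]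
    calc (d : ZMod a) ^ m * x = ((d ^ m : ℕ) : ZMod a) * x := by push_cast; ring
      _ = x := by rw [← smul_eq_mul, Nat.cast_smul_eq_nsmul, hsmul]
  exact hper.minimalPeriod_dvd

theorem stmt_12 (a d : ℕ) (ha : 1 ≤ a) (hcop : Nat.Coprime d a) :
    (Nat.card (MulAction.orbitRel.Quotient
        (Subgroup.zpowers (ZMod.unitOfCoprime d hcop)) (ZMod a)) : ℚ)
      ≥ ∑ f ∈ a.divisors, (Nat.totient f : ℚ) / (Monoid.exponent (ZMod f)ˣ : ℚ) := by
  classical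
  haveI : NeZero a := ⟨by omega⟩
  set u : (ZMod a)ˣ := ZMod.unitOfCoprime d hcop with hu
  -- dispose of the case d = 0 (then a = 1)
  rcases Nat.eq_zero_or_pos d with hd0 | hd0
  · subst hd0
    have ha1 : a = 1 := by simpa [Nat.coprime_zero_left] using hcop
    subst ha1
    have hne : Nonempty (MulAction.orbitRel.Quotient (Subgroup.zpowers u) (ZMod 1)) :=
      ⟨Quotient.mk'' 0⟩
    have hfin : Finite (MulAction.orbitRel.Quotient (Subgroup.zpowers u) (ZMod 1)) :=
      Quotient.finite _
    have h1 : 1 ≤ Nat.card (MulAction.orbitRel.Quotient (Subgroup.zpowers u) (ZMod 1)) :=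
      Nat.one_le_iff_ne_zero.mpr (Nat.card_ne_zero.mpr ⟨hne, hfin⟩)
    have hexp1 : Monoid.exponent (ZMod 1)ˣ = 1 :=
      Nat.dvd_one.mp (Monoid.exponent_dvd_of_forall_pow_eq_one fun g => Subsingleton.elim _ _)
    simp only [Nat.divisors_one, Finset.sum_singleton, Nat.totient_one, hexp1]
    push_cast
    exact_mod_cast h1
  -- main case
  set Ω := MulAction.orbitRel.Quotient (Subgroup.zpowers u) (ZMod a) with hΩ
  haveI : Finite Ω := Quotient.finite _
  haveI : Fintype Ω := Fintype.ofFinite Ω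
  set g : ZMod a → ℚ := fun x => 1 / (Monoid.exponent (ZMod (addOrderOf x))ˣ : ℚ) with hg
  -- Step 1 : RHS = ∑ x, g x
  have step1 : ∑ f ∈ a.divisors, (Nat.totient f : ℚ) / (Monoid.exponent (ZMod f)ˣ : ℚ)
      = ∑ x : ZMod a, g x := by
    have hmaps : ∀ x ∈ (Finset.univ : Finset (ZMod a)), addOrderOf x ∈ a.divisors := by
      intro x _
      refine Nat.mem_divisors.mpr ⟨?_, by omega⟩
      simpa [ZMod.card a] using addOrderOf_dvd_card (x := x)
    rw [← Finset.sum_fiberwise_of_maps_to hmaps g]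
    refine Finset.sum_congr rfl fun f hf => ?_
    have hfd : f ∣ Fintype.card (ZMod a) := by
      rw [ZMod.card a]; exact (Nat.mem_divisors.mp hf).1
    have hcard : (Finset.univ.filter (fun x : ZMod a => addOrderOf x = f)).card
        = Nat.totient f := by
      simpa using IsAddCyclic.card_addOrderOf_eq_totient (α := ZMod a) hfd
    have hconst : ∀ x ∈ Finset.univ.filter (fun x : ZMod a => addOrderOf x = f),
        g x = 1 / (Monoid.exponent (ZMod f)ˣ : ℚ) := by
      intro x hx
      have h := (Finset.mem_filter.mp hx).2
      simp only [hg]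
      rw [h]
    rw [Finset.sum_congr rfl hconst, Finset.sum_const, hcard, nsmul_eq_mul]
    ring
  -- Step 2 : ∑ x, g x ≤ card Ω
  have step2 : ∑ x : ZMod a, g x ≤ (Nat.card Ω : ℚ) := by
    have hmaps : ∀ x ∈ (Finset.univ : Finset (ZMod a)),
        (Quotient.mk'' x : Ω) ∈ (Finset.univ : Finset Ω) := fun _ _ => Finset.mem_univ _
    rw [← Finset.sum_fiberwise_of_maps_to hmaps g, Nat.card_eq_fintype_card,
      ← Finset.card_univ, ← Nat.smul_one_eq_cast, ← Finset.sum_const]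
    refine Finset.sum_le_sum fun q _ => ?_
    set F := Finset.univ.filter (fun x : ZMod a => (Quotient.mk'' x : Ω) = q) with hF
    -- every element of F has minimalPeriod = F.card and exponent ≥ F.card
    have key : ∀ x ∈ F, g x ≤ 1 / (F.card : ℚ) := by
      intro x hx
      have hq : (Quotient.mk'' x : Ω) = q := (Finset.mem_filter.mp hx).2
      haveI : Fintype ↥(MulAction.orbit (Subgroup.zpowers u) x) :=
        Set.Finite.fintype (Set.toFinite _)
      have horb : F = (MulAction.orbit (Subgroup.zpowers u) x).toFinset := by
        ext y
        simp only [hF, Finset.mem_filter, Finset.mem_univ, true_and, Set.mem_toFinset]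
        rw [← hq, ← MulAction.orbitRel.Quotient.mem_orbit,
          MulAction.orbitRel.Quotient.orbit_mk]
      have hmp : Function.minimalPeriod (u • ·) x = F.card := by
        rw [horb, Set.toFinset_card]
        exact MulAction.minimalPeriod_eq_card (α := (ZMod a)ˣ) (β := ZMod a) u x
      have hdvd := aux_period_dvd a d ha hcop hd0 x
      have hexp_pos : 0 < Monoid.exponent (ZMod (addOrderOf x))ˣ := by
        haveI : NeZero (addOrderOf x) := ⟨(addOrderOf_pos x).ne'⟩
        exact Monoid.ExponentExists.exponent_pos (Monoid.ExponentExists.of_finite)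
      have hle : F.card ≤ Monoid.exponent (ZMod (addOrderOf x))ˣ := by
        rw [← hmp]
        exact Nat.le_of_dvd hexp_pos hdvd
      have hFpos : 0 < F.card := Finset.card_pos.mpr ⟨x, hx⟩
      simp only [hg]
      apply one_div_le_one_div_of_le
      · exact_mod_cast hFpos
      · exact_mod_cast hle
    calc ∑ x ∈ F, g x ≤ ∑ _x ∈ F, 1 / (F.card : ℚ) := Finset.sum_le_sum key
      _ = F.card * (1 / (F.card : ℚ)) := by rw [Finset.sum_const, nsmul_eq_mul]
      _ ≤ 1 := by
          rcases Nat.eq_zero_or_pos F.card with h | h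
          · simp [h]
          · rw [mul_one_div, div_le_one (by exact_mod_cast h)]
  rw [ge_iff_le, step1]
  exact step2
end

section
/- For every a ∈ ℕ with a ≥ 1, there exists d ∈ ℕ coprime to a such that for every positive divisor f of a, the multiplicative order of d modulo f equals λ(f), the exponent of the group (ℤ/fℤ)*. -/
lemma zmod_pow_eq_one_iff (f d N : ℕ) :
    ((d : ZMod f)) ^ N = 1 ↔ (f : ℤ) ∣ (d : ℤ) ^ N - 1 := by
  have h : (((d : ℤ) ^ N - 1 : ℤ) : ZMod f) = (d : ZMod f) ^ N - 1 := by push_cast; ring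
  rw [← sub_eq_zero, ← h, ZMod.intCast_zmod_eq_zero_iff_dvd]

lemma ord_eq_exp_of {f d M : ℕ} (h : Nat.Coprime d f)
    (h1 : orderOf ((d : ZMod f)) = M) (h2 : Monoid.exponent (ZMod f)ˣ ∣ M) :
    orderOf ((d : ZMod f)) = Monoid.exponent (ZMod f)ˣ := by
  have hdvd : orderOf ((d : ZMod f)) ∣ Monoid.exponent (ZMod f)ˣ := by
    rw [← ZMod.coe_unitOfCoprime d h, orderOf_units]
    exact Monoid.order_dvd_exponent _
  exact Nat.dvd_antisymm hdvd (h1 ▸ h2)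

lemma exp_dvd_totient (f : ℕ) [NeZero f] : Monoid.exponent (ZMod f)ˣ ∣ Nat.totient f := by
  rw [← ZMod.card_units_eq_totient f]
  exact Group.exponent_dvd_card

lemma odd_prime_pow_case (p : ℕ) (hp : p.Prime) (hp2 : p ≠ 2) :
    ∃ d : ℕ, ¬ p ∣ d ∧
      ∀ c : ℕ, orderOf ((d : ZMod (p ^ c))) = Monoid.exponent (ZMod (p ^ c))ˣ := by
  haveI : Fact p.Prime := ⟨hp⟩
  have hp2le : 2 ≤ p := hp.two_le
  obtain ⟨g, hg⟩ := IsCyclic.exists_generator (α := (ZMod p)ˣ)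
  have hordg : orderOf g = p - 1 := by
    rw [orderOf_eq_card_of_forall_mem_zpowers hg, Nat.card_eq_fintype_card,
      ZMod.card_units_eq_totient, Nat.totient_prime hp]
  set g0 : ℕ := ((g : ZMod p)).val with hg0def
  have hg0 : ((g0 : ℕ) : ZMod p) = (g : ZMod p) := ZMod.natCast_rightInverse _
  have hpg0 : ¬ p ∣ g0 := by
    intro hdvd
    have h0 : ((g0 : ℕ) : ZMod p) = 0 := (ZMod.natCast_eq_zero_iff _ _).2 hdvd
    rw [hg0] at h0
    exact g.ne_zero h0
  have hfermat : (p : ℤ) ∣ (g0 : ℤ) ^ (p - 1) - 1 := by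
    have hgp : g ^ (p - 1) = 1 := by rw [← hordg]; exact pow_orderOf_eq_one g
    rw [← zmod_pow_eq_one_iff, hg0, ← Units.val_pow_eq_pow_val, hgp, Units.val_one]
  obtain ⟨d, hdg, hpd, h1, h2⟩ :
      ∃ d : ℕ, ((d : ℕ) : ZMod p) = (g : ZMod p) ∧ ¬ p ∣ d ∧
        (p : ℤ) ∣ (d : ℤ) ^ (p - 1) - 1 ∧ ¬ (p : ℤ) ^ 2 ∣ (d : ℤ) ^ (p - 1) - 1 := by
    by_cases hsq : (p : ℤ) ^ 2 ∣ (g0 : ℤ) ^ (p - 1) - 1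
    · have hb := sq_dvd_add_pow_sub_sub ((p : ℤ)) ((g0 : ℤ)) (p - 1)
      refine ⟨g0 + p, ?_, fun hc => hpg0 (Nat.dvd_add_self_right.1 hc), ?_, ?_⟩
      · push_cast [ZMod.natCast_self]
        rw [add_zero, hg0]
      · have heq : ((g0 : ℤ) + p) ^ (p - 1) - 1 =
            (((g0 : ℤ) + p) ^ (p - 1) - (g0 : ℤ) ^ (p - 1 - 1) * p * ((p - 1 : ℕ) : ℤ)
              - (g0 : ℤ) ^ (p - 1)) +
            (g0 : ℤ) ^ (p - 1 - 1) * p * ((p - 1 : ℕ) : ℤ) + ((g0 : ℤ) ^ (p - 1) - 1) := by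
          ring
        have : (p : ℤ) ∣ ((g0 : ℤ) + p) ^ (p - 1) - 1 := by
          rw [heq]
          exact dvd_add (dvd_add (dvd_trans (dvd_pow_self _ two_ne_zero) hb)
            ⟨(g0 : ℤ) ^ (p - 1 - 1) * ((p - 1 : ℕ) : ℤ), by ring⟩) hfermat
        exact_mod_cast this
      · intro hcon
        push_cast at hcon
        have hmid : (p : ℤ) ^ 2 ∣ (g0 : ℤ) ^ (p - 1 - 1) * p * ((p - 1 : ℕ) : ℤ) := by
          have heq : (g0 : ℤ) ^ (p - 1 - 1) * p * ((p - 1 : ℕ) : ℤ) =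
              (((g0 : ℤ) + p) ^ (p - 1) - 1) -
              (((g0 : ℤ) + p) ^ (p - 1) - (g0 : ℤ) ^ (p - 1 - 1) * p * ((p - 1 : ℕ) : ℤ)
                - (g0 : ℤ) ^ (p - 1)) - ((g0 : ℤ) ^ (p - 1) - 1) := by ring
          rw [heq]
          exact dvd_sub (dvd_sub hcon hb) hsq
        have hmid2 : (p : ℤ) * (p : ℤ) ∣
            ((g0 : ℤ) ^ (p - 1 - 1) * ((p - 1 : ℕ) : ℤ)) * p := by
          rw [← sq]
          convert hmid using 1
          ring
        have hpdvd : (p : ℤ) ∣ (g0 : ℤ) ^ (p - 1 - 1) * ((p - 1 : ℕ) : ℤ) := by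
          have hpne : (p : ℤ) ≠ 0 := by exact_mod_cast hp.pos.ne'
          exact (mul_dvd_mul_iff_right hpne).1 (by rwa [mul_comm ((p:ℤ)) ((p:ℤ))] at hmid2)
        have hPint : Prime ((p : ℤ)) := Nat.prime_iff_prime_int.1 hp
        rcases hPint.dvd_mul.1 hpdvd with hca | hcb
        · exact hpg0 (Int.natCast_dvd_natCast.1 (hPint.dvd_of_dvd_pow hca))
        · have : p ∣ p - 1 := Int.natCast_dvd_natCast.1 hcb
          have := Nat.le_of_dvd (by omega) this
          omega
    · exact ⟨g0, hg0, hpg0, hfermat, hsq⟩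
  have hPint : Prime ((p : ℤ)) := Nat.prime_iff_prime_int.1 hp
  have hoddp : Odd p := hp.odd_of_ne_two hp2
  have hxd : ¬ (p : ℤ) ∣ (d : ℤ) ^ (p - 1) :=
    fun h => hpd (Int.natCast_dvd_natCast.1 (hPint.dvd_of_dvd_pow h))
  have hbase : emultiplicity ((p : ℤ)) ((d : ℤ) ^ (p - 1) - 1) = (1 : ℕ) :=
    emultiplicity_eq_coe.2 ⟨by simpa using h1, by simpa using h2⟩
  have hmult : ∀ a : ℕ,
      emultiplicity ((p : ℤ)) ((d : ℤ) ^ ((p - 1) * p ^ a) - 1) = ((a + 1 : ℕ) : ℕ∞) := by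
    intro a
    have h := emultiplicity_pow_prime_pow_sub_pow_prime_pow (x := (d : ℤ) ^ (p - 1)) (y := 1)
      hPint hoddp (by simpa using h1) hxd a
    rw [one_pow, ← pow_mul, hbase] at h
    rw [h]
    push_cast
    rw [add_comm]
  refine ⟨d, hpd, fun c => ?_⟩
  have hcod : Nat.Coprime d p := (hp.coprime_iff_not_dvd.2 hpd).symm
  match c with
  | 0 =>
    haveI : Subsingleton (ZMod (p ^ 0)) := by rw [pow_zero]; infer_instance
    refine ord_eq_exp_of (M := 1) (hcod.pow_right 0)
      (orderOf_eq_one_iff.2 (Subsingleton.elim _ _)) ?_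
    haveI : NeZero (p ^ 0) := ⟨by positivity⟩
    have := exp_dvd_totient (p ^ 0)
    rwa [pow_zero, Nat.totient_one] at this
  | (c' + 1) =>
    haveI : NeZero (p ^ (c' + 1)) := ⟨pow_ne_zero _ hp.pos.ne'⟩
    have hcast : (((p ^ (c' + 1) : ℕ)) : ℤ) = ((p : ℤ)) ^ (c' + 1) := by push_cast; ring
    have hMone : ((d : ZMod (p ^ (c' + 1)))) ^ ((p - 1) * p ^ c') = 1 := by
      rw [zmod_pow_eq_one_iff, hcast]
      exact pow_dvd_of_le_emultiplicity (le_of_eq (hmult c').symm)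
    have htM : orderOf ((d : ZMod (p ^ (c' + 1)))) ∣ (p - 1) * p ^ c' :=
      orderOf_dvd_of_pow_eq_one hMone
    have hp1t : (p - 1) ∣ orderOf ((d : ZMod (p ^ (c' + 1)))) := by
      have hpow : ((d : ZMod (p ^ (c' + 1)))) ^ orderOf ((d : ZMod (p ^ (c' + 1)))) = 1 :=
        pow_orderOf_eq_one _
      rw [zmod_pow_eq_one_iff, hcast] at hpow
      have hpdvd' : (p : ℤ) ∣ (d : ℤ) ^ orderOf ((d : ZMod (p ^ (c' + 1)))) - 1 :=
        dvd_trans (dvd_pow_self _ (Nat.succ_ne_zero c')) hpow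
      have hone : ((d : ZMod p)) ^ orderOf ((d : ZMod (p ^ (c' + 1)))) = 1 :=
        (zmod_pow_eq_one_iff p d _).2 hpdvd'
      rw [hdg] at hone
      have hgone : g ^ orderOf ((d : ZMod (p ^ (c' + 1)))) = 1 :=
        Units.ext (by rw [Units.val_pow_eq_pow_val, hone, Units.val_one])
      have := orderOf_dvd_of_pow_eq_one hgone
      rwa [hordg] at this
    obtain ⟨m, hm⟩ := hp1t
    have hmdvd : m ∣ p ^ c' :=
      (mul_dvd_mul_iff_left (a := p - 1) (by omega)).1 (by rw [← hm]; exact htM)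
    obtain ⟨j, hjle, hjm⟩ := (Nat.dvd_prime_pow hp).1 hmdvd
    have hj : j = c' := by
      by_contra hne
      have hjlt : j < c' := lt_of_le_of_ne hjle hne
      have htdvd : orderOf ((d : ZMod (p ^ (c' + 1)))) = (p - 1) * p ^ j := by rw [hm, hjm]
      have hpowj : ((d : ZMod (p ^ (c' + 1)))) ^ ((p - 1) * p ^ j) = 1 :=
        htdvd ▸ pow_orderOf_eq_one _
      rw [zmod_pow_eq_one_iff, hcast] at hpowj
      have hle := le_emultiplicity_of_pow_dvd hpowj
      rw [hmult j] at hle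
      have : c' + 1 ≤ j + 1 := by exact_mod_cast hle
      omega
    have ht_eq : orderOf ((d : ZMod (p ^ (c' + 1)))) = (p - 1) * p ^ c' := by
      rw [hm, hjm, hj]
    refine ord_eq_exp_of (hcod.pow_right _) ht_eq ?_
    have hexp := exp_dvd_totient (p ^ (c' + 1))
    rwa [Nat.totient_prime_pow hp (Nat.succ_pos c'), Nat.succ_sub_one, mul_comm] at hexp
lemma crt_ord (f1 f2 d : ℕ) (h : Nat.Coprime f1 f2) :
    orderOf ((d : ZMod (f1 * f2))) =
      Nat.lcm (orderOf ((d : ZMod f1))) (orderOf ((d : ZMod f2))) := by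
  have e := ZMod.chineseRemainder h
  have h1 : orderOf (e ((d : ZMod (f1 * f2)))) = orderOf ((d : ZMod (f1 * f2))) :=
    orderOf_injective e.toRingHom.toMonoidHom e.injective _
  have h2 : e ((d : ZMod (f1 * f2))) = ((d : ZMod f1), (d : ZMod f2)) := by
    exact (map_natCast e d).trans (Prod.ext (Prod.fst_natCast d) (Prod.snd_natCast d))
  rw [← h1, h2, Prod.orderOf]

lemma crt_exp (f1 f2 : ℕ) (h : Nat.Coprime f1 f2) :
    Monoid.exponent (ZMod (f1 * f2))ˣ =
      Nat.lcm (Monoid.exponent (ZMod f1)ˣ) (Monoid.exponent (ZMod f2)ˣ) := by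
  rw [Monoid.exponent_eq_of_mulEquiv
        (Units.mapEquiv (ZMod.chineseRemainder h).toMulEquiv),
      Monoid.exponent_eq_of_mulEquiv MulEquiv.prodUnits, Monoid.exponent_prod, lcm_eq_nat_lcm]


lemma three_pow (k : ℕ) : ∃ u : ℤ, Odd u ∧ (3 : ℤ) ^ (2 ^ (k + 1)) = 1 + 2 ^ (k + 3) * u := by
  induction k with
  | zero => exact ⟨1, odd_one, by norm_num⟩
  | succ k ih =>
    obtain ⟨u, hu, h⟩ := ih
    refine ⟨u + 2 ^ (k + 2) * u ^ 2, hu.add_even ⟨2 ^ (k + 1) * u ^ 2, by ring⟩, ?_⟩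
    have h2 : (3 : ℤ) ^ (2 ^ (k + 2)) = ((3 : ℤ) ^ (2 ^ (k + 1))) ^ 2 := by
      rw [← pow_mul, pow_succ]
    rw [h2, h]; ring

lemma odd_pow_two_dvd (k : ℕ) (x : ℤ) (hx : Odd x) :
    (2 : ℤ) ^ (k + 3) ∣ x ^ (2 ^ (k + 1)) - 1 := by
  induction k with
  | zero =>
    obtain ⟨m, rfl⟩ := hx
    obtain ⟨r, hr⟩ := Int.even_mul_succ_self m
    refine ⟨r, ?_⟩
    have h2 : m * (m + 1) = 2 * r := by omega
    have : (2 * m + 1) ^ (2 ^ (0 + 1)) - 1 = 4 * (m * (m + 1)) := by ring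
    rw [this, h2]; ring
  | succ k ih =>
    have h2 : x ^ (2 ^ (k + 2)) - 1
        = (x ^ (2 ^ (k + 1)) - 1) * (x ^ (2 ^ (k + 1)) + 1) := by
      have : x ^ (2 ^ (k + 2)) = (x ^ (2 ^ (k + 1))) ^ 2 := by rw [← pow_mul, pow_succ]
      rw [this]; ring
    rw [h2, pow_succ]
    have heven : (2 : ℤ) ∣ x ^ (2 ^ (k + 1)) + 1 := by
      rcases (hx.pow : Odd (x ^ (2 ^ (k + 1)))) with ⟨m, hm⟩
      exact ⟨m + 1, by omega⟩
    exact mul_dvd_mul ih heven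



lemma orderOf_three (k : ℕ) : orderOf ((3 : ℕ) : ZMod (2 ^ (k + 3))) = 2 ^ (k + 1) := by
  obtain ⟨u, hu, h3⟩ := three_pow k
  have hpow : ((3 : ℕ) : ZMod (2 ^ (k + 3))) ^ (2 ^ (k + 1)) = 1 := by
    rw [zmod_pow_eq_one_iff]
    push_cast
    exact ⟨u, by rw [h3]; ring⟩
  have hdvd : orderOf ((3 : ℕ) : ZMod (2 ^ (k + 3))) ∣ 2 ^ (k + 1) :=
    orderOf_dvd_of_pow_eq_one hpow
  obtain ⟨j, hj, hej⟩ := (Nat.dvd_prime_pow Nat.prime_two).1 hdvd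
  rcases Nat.lt_or_ge j (k + 1) with hlt | hge
  · exfalso
    have hj' : orderOf ((3 : ℕ) : ZMod (2 ^ (k + 3))) ∣ 2 ^ k :=
      hej ▸ pow_dvd_pow 2 (Nat.lt_succ_iff.1 hlt)
    have hone : ((3 : ℕ) : ZMod (2 ^ (k + 3))) ^ (2 ^ k) = 1 :=
      orderOf_dvd_iff_pow_eq_one.1 hj'
    rw [zmod_pow_eq_one_iff] at hone
    push_cast at hone
    cases k with
    | zero => norm_num at hone
    | succ k' =>
      obtain ⟨u', hu', h3'⟩ := three_pow k'
      rw [h3'] at hone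
      have h2 : (2 : ℤ) ^ (k' + 1 + 3) = 2 ^ (k' + 3) * 2 := by ring
      rw [h2] at hone
      have : (2 : ℤ) ∣ u' := by
        have := (mul_dvd_mul_iff_left (a := (2:ℤ)^(k'+3)) (by positivity)).1
          (by simpa [add_sub_cancel_left] using hone)
        exact this
      exact (Int.not_odd_iff_even.2 ⟨u' / 2, by omega⟩) hu'
  · rw [hej]
    congr 1
    omega

lemma exp_two_pow_dvd (k : ℕ) : Monoid.exponent (ZMod (2 ^ (k + 3)))ˣ ∣ 2 ^ (k + 1) := by
  apply Monoid.exponent_dvd_of_forall_pow_eq_one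
  intro u
  have hco := ZMod.val_coe_unit_coprime u
  have hodd : Odd (((u : ZMod (2 ^ (k + 3))).val : ℤ)) := by
    rcases Nat.even_or_odd (u : ZMod (2 ^ (k + 3))).val with he | ho
    · exfalso
      have h2 : (2 : ℕ) ∣ Nat.gcd (u : ZMod (2 ^ (k + 3))).val (2 ^ (k + 3)) :=
        Nat.dvd_gcd he.two_dvd (dvd_pow_self 2 (by omega))
      rw [hco] at h2
      omega
    · exact_mod_cast ho
  have hdvd := odd_pow_two_dvd k _ hodd
  have hval : (((u : ZMod (2 ^ (k + 3))).val : ℕ) : ZMod (2 ^ (k + 3))) = (u : ZMod (2 ^ (k + 3))) :=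
    ZMod.natCast_rightInverse _
  have := (zmod_pow_eq_one_iff (2 ^ (k + 3)) (u : ZMod (2 ^ (k + 3))).val (2 ^ (k + 1))).2
    (by push_cast; exact_mod_cast hdvd)
  rw [hval] at this
  ext
  push_cast [this]
  rfl

lemma two_pow_case (c : ℕ) :
    orderOf ((3 : ℕ) : ZMod (2 ^ c)) = Monoid.exponent (ZMod (2 ^ c))ˣ := by
  have hco : Nat.Coprime 3 (2 ^ c) := Nat.Coprime.pow_right c (by norm_num)
  match c with
  | 0 =>
    refine ord_eq_exp_of (M := 1) hco (orderOf_eq_one_iff.2 (by decide)) ?_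
    simpa using exp_dvd_totient (2 ^ 0)
  | 1 =>
    refine ord_eq_exp_of (M := 1) hco (orderOf_eq_one_iff.2 (by decide)) ?_
    simpa using exp_dvd_totient (2 ^ 1)
  | 2 =>
    refine ord_eq_exp_of (M := 2) hco (orderOf_eq_prime (by decide) (by decide)) ?_
    have h := exp_dvd_totient (2 ^ 2)
    rw [Nat.totient_prime_pow Nat.prime_two (by norm_num)] at h
    simpa using h
  | (k + 3) =>
    exact ord_eq_exp_of hco (orderOf_three k) (exp_two_pow_dvd k)


theorem stmt_13 (a : ℕ) (ha : 1 ≤ a) :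
    ∃ d : ℕ, Nat.Coprime d a ∧
      ∀ f ∈ a.divisors, orderOf ((d : ZMod f)) = Monoid.exponent (ZMod f)ˣ := by
  suffices h : ∀ n : ℕ, 0 < n → ∃ d : ℕ, Nat.Coprime d n ∧
      ∀ f : ℕ, f ∣ n → orderOf ((d : ZMod f)) = Monoid.exponent (ZMod f)ˣ by
    obtain ⟨d, h1, h2⟩ := h a ha
    exact ⟨d, h1, fun f hf => h2 f (Nat.dvd_of_mem_divisors hf)⟩
  intro n
  induction n using Nat.recOnPosPrimePosCoprime with
  | prime_pow p k hpr hk =>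
    intro _
    have hp' : p.Prime := hpr
    by_cases hp2 : p = 2
    · subst hp2
      refine ⟨3, Nat.Coprime.pow_right _ (by norm_num), fun f hf => ?_⟩
      obtain ⟨c, _, rfl⟩ := (Nat.dvd_prime_pow hp').1 hf
      exact two_pow_case c
    · obtain ⟨d, hpd, hall⟩ := odd_prime_pow_case p hp' hp2
      refine ⟨d, Nat.Coprime.pow_right _ ((hp'.coprime_iff_not_dvd.2 hpd).symm),
        fun f hf => ?_⟩
      obtain ⟨c, _, rfl⟩ := (Nat.dvd_prime_pow hp').1 hf
      exact hall c
  | zero => intro h; omega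
  | one =>
    intro _
    refine ⟨1, Nat.coprime_one_left 1, fun f hf => ?_⟩
    have hf1 : f = 1 := Nat.dvd_one.1 hf
    subst hf1
    refine ord_eq_exp_of (M := 1) (Nat.coprime_one_right 1)
      (orderOf_eq_one_iff.2 (Subsingleton.elim _ _)) ?_
    simpa using exp_dvd_totient 1
  | coprime a b ha1 hb1 hab iha ihb =>
    intro _
    obtain ⟨d1, hco1, h1⟩ := iha (by omega)
    obtain ⟨d2, hco2, h2⟩ := ihb (by omega)
    obtain ⟨k, hk1, hk2⟩ := Nat.chineseRemainder hab d1 d2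
    haveI : NeZero a := ⟨by omega⟩
    haveI : NeZero b := ⟨by omega⟩
    have hcast1 : ∀ f : ℕ, f ∣ a → ((k : ZMod f)) = (d1 : ZMod f) := fun f hf =>
      (ZMod.natCast_eq_natCast_iff _ _ _).2 (hk1.of_dvd hf)
    have hcast2 : ∀ f : ℕ, f ∣ b → ((k : ZMod f)) = (d2 : ZMod f) := fun f hf =>
      (ZMod.natCast_eq_natCast_iff _ _ _).2 (hk2.of_dvd hf)
    have hka : Nat.Coprime k a := by
      rw [← ZMod.isUnit_iff_coprime]
      rw [hcast1 a dvd_rfl, ZMod.isUnit_iff_coprime]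
      exact hco1
    have hkb : Nat.Coprime k b := by
      rw [← ZMod.isUnit_iff_coprime]
      rw [hcast2 b dvd_rfl, ZMod.isUnit_iff_coprime]
      exact hco2
    refine ⟨k, hka.mul_right hkb, fun f hf => ?_⟩
    obtain ⟨f1, f2, hf1, hf2, rfl⟩ := Nat.dvd_mul.1 hf
    have hcopf : Nat.Coprime f1 f2 :=
      Nat.Coprime.coprime_dvd_left hf1 (Nat.Coprime.coprime_dvd_right hf2 hab)
    rw [crt_ord f1 f2 k hcopf, crt_exp f1 f2 hcopf, hcast1 f1 hf1, hcast2 f2 hf2,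
      h1 f1 hf1, h2 f2 hf2]
end

section
/- Let p and q be distinct primes and let d ∈ ℕ be coprime to p·q. Let ξ(pq,d) denote the number of orbits of the action on ℤ/pqℤ of the subgroup of (ℤ/pqℤ)* generated by d. Then, as rational numbers, ξ(pq,d) = 1 + (p−1)/α_p(d) + (q−1)/α_q(d) + ((p−1)(q−1)/(α_p(d)·α_q(d))) · gcd(α_p(d), α_q(d)), where α_p(d) and α_q(d) are the multiplicative orders of d modulo p and modulo q respectively. -/
open Finset

set_option linter.unnecessarySeqFocus false

lemma aux_card_filter (a m : ℕ) (ha : 0 < a) :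
    ((Finset.range (a * m)).filter (fun k => a ∣ k)).card = m := by
  have h : (Finset.range (a * m)).filter (fun k => a ∣ k)
      = (Finset.range m).image (fun j => a * j) := by
    ext k
    simp only [mem_filter, mem_range, mem_image]
    constructor
    · rintro ⟨hk, j, rfl⟩
      exact ⟨j, lt_of_mul_lt_mul_left hk (le_of_lt ha), rfl⟩
    · rintro ⟨j, hj, rfl⟩
      exact ⟨(Nat.mul_lt_mul_left ha).mpr hj, Dvd.intro j rfl⟩
  rw [h, Finset.card_image_of_injective _ (fun x y hxy => Nat.eq_of_mul_eq_mul_left ha hxy),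
    Finset.card_range]

lemma aux_card_filter' (a b : ℕ) (ha : 0 < a) (hb : 0 < b) :
    ((Finset.range (Nat.lcm a b)).filter (fun k => a ∣ k ∧ b ∣ k)).card = 1 := by
  have hL : 0 < Nat.lcm a b := Nat.pos_of_ne_zero (Nat.lcm_ne_zero ha.ne' hb.ne')
  have h : (Finset.range (Nat.lcm a b)).filter (fun k => a ∣ k ∧ b ∣ k) = {0} := by
    ext k
    simp only [mem_filter, mem_range, mem_singleton]
    constructor
    · rintro ⟨hk, hak, hbk⟩
      have hd : Nat.lcm a b ∣ k := Nat.lcm_dvd hak hbk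
      rcases Nat.eq_zero_or_pos k with rfl | hk0
      · rfl
      · exact absurd hk (not_lt.mpr (Nat.le_of_dvd hk0 hd))
    · rintro rfl
      exact ⟨hL, dvd_zero a, dvd_zero b⟩
  rw [h, card_singleton]

lemma aux_sum (P Q : ℚ) (a b : ℕ) (ha : 0 < a) (hb : 0 < b) :
    (∑ k ∈ Finset.range (Nat.lcm a b), (if a ∣ k then P else 1) * (if b ∣ k then Q else 1))
      = (Nat.lcm a b : ℚ) + (P - 1) * ((Nat.lcm a b / a : ℕ) : ℚ)
        + (Q - 1) * ((Nat.lcm a b / b : ℕ) : ℚ) + (P - 1) * (Q - 1) := by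
  classical
  have hterm : ∀ k : ℕ, (if a ∣ k then P else 1) * (if b ∣ k then Q else 1)
      = 1 + (P - 1) * (if a ∣ k then (1:ℚ) else 0) + (Q - 1) * (if b ∣ k then (1:ℚ) else 0)
        + (P - 1) * (Q - 1) * (if a ∣ k ∧ b ∣ k then (1:ℚ) else 0) := by
    intro k
    by_cases h1 : a ∣ k <;> by_cases h2 : b ∣ k <;> simp [h1, h2] <;> ring
  simp only [hterm]
  rw [Finset.sum_add_distrib, Finset.sum_add_distrib, Finset.sum_add_distrib,
    ← Finset.mul_sum, ← Finset.mul_sum, ← Finset.mul_sum,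
    Finset.sum_boole, Finset.sum_boole, Finset.sum_boole, Finset.sum_const, Finset.card_range]
  have c1 : ((Finset.range (Nat.lcm a b)).filter (fun k => a ∣ k)).card = Nat.lcm a b / a := by
    conv_lhs => rw [show Nat.lcm a b = a * (Nat.lcm a b / a) from
      (Nat.mul_div_cancel' (Nat.dvd_lcm_left a b)).symm]
    rw [aux_card_filter _ _ ha]
  have c2 : ((Finset.range (Nat.lcm a b)).filter (fun k => b ∣ k)).card = Nat.lcm a b / b := by
    conv_lhs => rw [show Nat.lcm a b = b * (Nat.lcm a b / b) from
      (Nat.mul_div_cancel' (Nat.dvd_lcm_right a b)).symm]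
    rw [aux_card_filter _ _ hb]
  rw [c1, c2, aux_card_filter' a b ha hb]
  push_cast
  ring

lemma aux_fix_card (F : Type*) [Field F] [Fintype F] (c : F) [Decidable (c = 1)] :
    Nat.card {x : F // c * x = x} = if c = 1 then Fintype.card F else 1 := by
  split_ifs with h
  · subst h
    rw [Nat.card_congr (Equiv.subtypeUnivEquiv (fun x => one_mul x)), Nat.card_eq_fintype_card]
  · have key : ∀ x : F, (c * x = x) ↔ x = 0 := by
      intro x
      rw [← sub_eq_zero, ← sub_one_mul, mul_eq_zero, sub_eq_zero]
      simp [h]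
    rw [Nat.card_congr (Equiv.subtypeEquivRight key)]
    haveI : Unique {x : F // x = 0} := ⟨⟨⟨0, rfl⟩⟩, by rintro ⟨x, rfl⟩; rfl⟩
    exact Nat.card_unique

lemma aux_prod_card {p q : ℕ} (hco : Nat.Coprime p q) (c : ZMod (p * q)) :
    Nat.card {x : ZMod (p * q) // c * x = x}
      = Nat.card {x : ZMod p // (ZMod.chineseRemainder hco c).1 * x = x}
        * Nat.card {y : ZMod q // (ZMod.chineseRemainder hco c).2 * y = y} := by
  set e := ZMod.chineseRemainder hco
  have e1 : {x : ZMod (p * q) // c * x = x} ≃ {y : ZMod p × ZMod q // e c * y = y} :=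
    e.toEquiv.subtypeEquiv (fun x => by
      change c * x = x ↔ e c * e x = e x
      rw [← map_mul]
      exact ⟨fun h => congrArg e h, fun h => e.injective h⟩)
  have e2 : {y : ZMod p × ZMod q // e c * y = y}
      ≃ {y : ZMod p × ZMod q // (e c).1 * y.1 = y.1 ∧ (e c).2 * y.2 = y.2} :=
    Equiv.subtypeEquivRight (fun y => by
      constructor
      · intro h; exact ⟨congrArg Prod.fst h, congrArg Prod.snd h⟩
      · intro h; exact Prod.ext h.1 h.2)
  rw [Nat.card_congr (e1.trans (e2.trans (Equiv.subtypeProdEquivProd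
    (p := fun z => (e c).1 * z = z) (q := fun z => (e c).2 * z = z)))), Nat.card_prod]

theorem stmt_16 (p q d : ℕ) (hp : p.Prime) (hq : q.Prime) (hpq : p ≠ q)
    (hcop : Nat.Coprime d (p * q)) :
    (Nat.card (MulAction.orbitRel.Quotient
        (Subgroup.zpowers (ZMod.unitOfCoprime d hcop)) (ZMod (p * q))) : ℚ)
      = 1 + ((p : ℚ) - 1) / (orderOf ((d : ZMod p)) : ℚ)
          + ((q : ℚ) - 1) / (orderOf ((d : ZMod q)) : ℚ)
          + (((p : ℚ) - 1) * ((q : ℚ) - 1))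
              / ((orderOf ((d : ZMod p)) : ℚ) * (orderOf ((d : ZMod q)) : ℚ))
            * (Nat.gcd (orderOf ((d : ZMod p))) (orderOf ((d : ZMod q))) : ℚ) := by
  classical
  haveI fp : Fact p.Prime := ⟨hp⟩
  haveI fq : Fact q.Prime := ⟨hq⟩
  haveI : NeZero (p * q) := ⟨Nat.mul_ne_zero hp.pos.ne' hq.pos.ne'⟩
  have hco : Nat.Coprime p q := (Nat.coprime_primes hp hq).mpr hpq
  set a := orderOf ((d : ZMod p)) with ha_def
  set b := orderOf ((d : ZMod q)) with hb_def
  set u := ZMod.unitOfCoprime d hcop with hu_def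
  set e := ZMod.chineseRemainder hco with he_def
  have hed : ∀ k : ℕ, e ((d : ZMod (p * q)) ^ k) = ((d : ZMod p) ^ k, (d : ZMod q) ^ k) := by
    intro k
    rw [map_pow, map_natCast]
    rfl
  have hL : orderOf u = Nat.lcm a b := by
    rw [← orderOf_units, ZMod.coe_unitOfCoprime, ← MulEquiv.orderOf_eq e.toMulEquiv]
    have h1 : e.toMulEquiv ((d : ZMod (p * q))) = ((d : ZMod p), (d : ZMod q)) := by
      simpa using hed 1
    rw [h1, Prod.orderOf_mk]
  have hLpos : 0 < Nat.lcm a b := hL ▸ orderOf_pos u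
  have hapos : 0 < a := by
    rcases Nat.eq_zero_or_pos a with h | h
    · rw [h, Nat.lcm_zero_left] at hLpos; exact absurd hLpos (lt_irrefl 0)
    · exact h
  have hbpos : 0 < b := by
    rcases Nat.eq_zero_or_pos b with h | h
    · rw [h, Nat.lcm_zero_right] at hLpos; exact absurd hLpos (lt_irrefl 0)
    · exact h
  -- fixed point counts
  have hfix : ∀ (k : ℕ) (h : ↥(Subgroup.zpowers u)), (h : (ZMod (p * q))ˣ) = u ^ k →
      Nat.card (MulAction.fixedBy (ZMod (p * q)) h)
        = (if a ∣ k then p else 1) * (if b ∣ k then q else 1) := by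
    intro k h hk
    have hsmul : ∀ x : ZMod (p * q), h • x = (d : ZMod (p * q)) ^ k * x := by
      intro x
      rw [Subgroup.smul_def, hk, Units.smul_def, Units.val_pow_eq_pow_val,
        ZMod.coe_unitOfCoprime, smul_eq_mul]
    have hset : MulAction.fixedBy (ZMod (p * q)) h
        = {x : ZMod (p * q) | (d : ZMod (p * q)) ^ k * x = x} := by
      ext x
      rw [MulAction.mem_fixedBy, hsmul x]
      rfl
    calc Nat.card (MulAction.fixedBy (ZMod (p * q)) h)
        = Nat.card {x : ZMod (p * q) // (d : ZMod (p * q)) ^ k * x = x} :=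
          Nat.card_congr (Equiv.setCongr hset)
      _ = Nat.card {x : ZMod p // (e ((d : ZMod (p * q)) ^ k)).1 * x = x}
            * Nat.card {y : ZMod q // (e ((d : ZMod (p * q)) ^ k)).2 * y = y} :=
          aux_prod_card hco _
      _ = (if a ∣ k then p else 1) * (if b ∣ k then q else 1) := by
          rw [hed k]
          rw [aux_fix_card, aux_fix_card, ZMod.card, ZMod.card]
          congr 1
          · exact if_congr (by rw [ha_def, orderOf_dvd_iff_pow_eq_one]) rfl rfl
          · exact if_congr (by rw [hb_def, orderOf_dvd_iff_pow_eq_one]) rfl rfl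
  -- Burnside
  haveI : ∀ h : ↥(Subgroup.zpowers u), Fintype (MulAction.fixedBy (ZMod (p * q)) h) :=
    fun h => Fintype.ofFinite _
  haveI : Fintype (Quotient (MulAction.orbitRel (↥(Subgroup.zpowers u)) (ZMod (p * q)))) :=
    Fintype.ofFinite _
  have burnside := MulAction.sum_card_fixedBy_eq_card_orbits_mul_card_group
    (↥(Subgroup.zpowers u)) (ZMod (p * q))
  have hfin : IsOfFinOrder u := orderOf_pos_iff.mp (orderOf_pos u)
  have hsum : (∑ h : ↥(Subgroup.zpowers u), Fintype.card (MulAction.fixedBy (ZMod (p * q)) h))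
      = ∑ k ∈ Finset.range (Nat.lcm a b), (if a ∣ k then p else 1) * (if b ∣ k then q else 1) := by
    rw [← hL, ← Fin.sum_univ_eq_sum_range]
    set eqv : Fin (orderOf u) ≃ ↥(Subgroup.zpowers u) :=
      (finEquivZPowers hfin).trans (Equiv.subtypeEquivRight (fun x => Iff.rfl)) with heqv
    have hval : ∀ i : Fin (orderOf u), ((eqv i : ↥(Subgroup.zpowers u)) : (ZMod (p * q))ˣ)
        = u ^ (i : ℕ) := by
      intro i
      rw [heqv]
      simp [Equiv.subtypeEquivRight, finEquivZPowers_apply]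
      rfl
    refine (Fintype.sum_equiv eqv
      (fun i => (if a ∣ (i : ℕ) then p else 1) * (if b ∣ (i : ℕ) then q else 1))
      (fun h => Fintype.card (MulAction.fixedBy (ZMod (p * q)) h)) ?_).symm
    intro i
    show (if a ∣ (i : ℕ) then p else 1) * (if b ∣ (i : ℕ) then q else 1)
      = Fintype.card (MulAction.fixedBy (ZMod (p * q)) (eqv i))
    rw [← Nat.card_eq_fintype_card]
    exact (hfix i (eqv i) (hval i)).symm
  have hcardH : Fintype.card ↥(Subgroup.zpowers u) = Nat.lcm a b := by
    rw [Fintype.card_zpowers, hL]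
  set N := Nat.card (MulAction.orbitRel.Quotient (Subgroup.zpowers u) (ZMod (p * q))) with hN
  have hNcard : N = Fintype.card
      (Quotient (MulAction.orbitRel (↥(Subgroup.zpowers u)) (ZMod (p * q)))) :=
    Nat.card_eq_fintype_card
  have h1 : (N * Nat.lcm a b : ℕ) = ∑ k ∈ Finset.range (Nat.lcm a b),
      (if a ∣ k then p else 1) * (if b ∣ k then q else 1) := by
    have hb1 := burnside
    rw [hsum, hcardH, ← hNcard] at hb1
    exact hb1.symm
  have h2 : ((N : ℚ)) * ((Nat.lcm a b : ℕ) : ℚ) = ∑ k ∈ Finset.range (Nat.lcm a b),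
      (if a ∣ k then (p : ℚ) else 1) * (if b ∣ k then (q : ℚ) else 1) := by
    have := congrArg (fun n : ℕ => (n : ℚ)) h1
    push_cast [apply_ite (fun n : ℕ => ((n : ℚ)))] at this
    exact this
  rw [aux_sum (p : ℚ) (q : ℚ) a b hapos hbpos] at h2
  have haQ : (a : ℚ) ≠ 0 := Nat.cast_ne_zero.mpr hapos.ne'
  have hbQ : (b : ℚ) ≠ 0 := Nat.cast_ne_zero.mpr hbpos.ne'
  have hLQ : ((Nat.lcm a b : ℕ) : ℚ) ≠ 0 := Nat.cast_ne_zero.mpr hLpos.ne'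
  have hdiva : ((Nat.lcm a b / a : ℕ) : ℚ) = ((Nat.lcm a b : ℕ) : ℚ) / (a : ℚ) :=
    Nat.cast_div (Nat.dvd_lcm_left a b) haQ
  have hdivb : ((Nat.lcm a b / b : ℕ) : ℚ) = ((Nat.lcm a b : ℕ) : ℚ) / (b : ℚ) :=
    Nat.cast_div (Nat.dvd_lcm_right a b) hbQ
  have hg : ((Nat.gcd a b : ℕ) : ℚ) * ((Nat.lcm a b : ℕ) : ℚ) = (a : ℚ) * (b : ℚ) := by
    exact_mod_cast congrArg (Nat.cast : ℕ → ℚ) (Nat.gcd_mul_lcm a b)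
  rw [hdiva, hdivb] at h2
  have hNval : (N : ℚ) = (((Nat.lcm a b : ℕ) : ℚ) + ((p : ℚ) - 1) * (((Nat.lcm a b : ℕ) : ℚ) / a)
      + ((q : ℚ) - 1) * (((Nat.lcm a b : ℕ) : ℚ) / b) + ((p : ℚ) - 1) * ((q : ℚ) - 1))
        / ((Nat.lcm a b : ℕ) : ℚ) := by
    rw [eq_div_iff hLQ]
    exact h2
  rw [hNval, div_eq_iff hLQ]
  field_simp
  linear_combination (-(((p : ℚ) - 1) * ((q : ℚ) - 1))) * hg
end

section
/- Let a, d, m, x ∈ ℕ with a ≥ 1, m ≥ 1, d ≥ 2, and d ∤ x. Suppose that for every k ≥ 1, d does not divide m^k·x + a·(m^{k−1} + m^{k−2} + … + m + 1). Then for every k ∈ ℕ, the k-th iterate of the generalized Collatz function satisfies C'_{a,d,m}^(k)(x) = m^k·x + a·Σ_{i=0}^{k−1} m^i; in particular the trajectory of x under C'_{a,d,m} is strictly increasing and does not loop (there are no N ∈ ℕ and k ≥ 1 with C'_{a,d,m}^(N+k)(x) = C'_{a,d,m}^(N)(x)). -/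
/-- The generalized Collatz function `C'_{a,d,m}`. -/
def genCollatz (a d m : ℕ) (x : ℕ) : ℕ := if d ∣ x then x / d else m * x + a

theorem stmt_17 (a d m x : ℕ) (ha : 1 ≤ a) (hm : 1 ≤ m) (hd : 2 ≤ d)
    (hx : ¬ d ∣ x)
    (hnd : ∀ k : ℕ, 1 ≤ k → ¬ d ∣ (m ^ k * x + a * ∑ i ∈ Finset.range k, m ^ i)) :
    (∀ k : ℕ, (genCollatz a d m)^[k] x = m ^ k * x + a * ∑ i ∈ Finset.range k, m ^ i) ∧
    StrictMono (fun k : ℕ => (genCollatz a d m)^[k] x) ∧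
    ¬ ∃ (N k : ℕ), 1 ≤ k ∧ (genCollatz a d m)^[N + k] x = (genCollatz a d m)^[N] x := by
  have hform : ∀ k : ℕ, (genCollatz a d m)^[k] x
      = m ^ k * x + a * ∑ i ∈ Finset.range k, m ^ i := by
    intro k
    induction k with
    | zero => simp
    | succ n ih =>
      rw [Function.iterate_succ_apply', ih]
      have hndiv : ¬ d ∣ (m ^ n * x + a * ∑ i ∈ Finset.range n, m ^ i) := by
        rcases Nat.eq_zero_or_pos n with h0 | h0
        · subst h0; simpa using hx
        · exact hnd n h0
      simp only [genCollatz, if_neg hndiv]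
      rw [Finset.sum_range_succ']
      simp only [pow_succ]
      rw [← Finset.sum_mul]
      ring
  refine ⟨hform, ?_, ?_⟩
  · have hmono : StrictMono (fun k : ℕ => (genCollatz a d m)^[k] x) := by
      apply strictMono_nat_of_lt_succ
      intro n
      simp only [hform]
      have : (Finset.range n).sum (m ^ ·) < (Finset.range (n+1)).sum (m ^ ·) := by
        rw [Finset.sum_range_succ]
        exact Nat.lt_add_of_pos_right (pow_pos hm n)
      calc m ^ n * x + a * ∑ i ∈ Finset.range n, m ^ i
          ≤ m ^ (n+1) * x + a * ∑ i ∈ Finset.range n, m ^ i := by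
            gcongr <;> first
              | exact hm
              | exact Nat.pow_le_pow_right hm (Nat.le_succ n)
              | omega
        _ < m ^ (n+1) * x + a * ∑ i ∈ Finset.range (n+1), m ^ i := by
            gcongr <;> first | exact ha | exact this
    exact hmono
  · rintro ⟨N, k, hk, heq⟩
    have hmono : StrictMono (fun k : ℕ => (genCollatz a d m)^[k] x) := by
      apply strictMono_nat_of_lt_succ
      intro n
      simp only [hform]
      have : (Finset.range n).sum (m ^ ·) < (Finset.range (n+1)).sum (m ^ ·) := by
        rw [Finset.sum_range_succ]
        exact Nat.lt_add_of_pos_right (pow_pos hm n)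
      calc m ^ n * x + a * ∑ i ∈ Finset.range n, m ^ i
          ≤ m ^ (n+1) * x + a * ∑ i ∈ Finset.range n, m ^ i := by
            gcongr <;> first
              | exact hm
              | exact Nat.pow_le_pow_right hm (Nat.le_succ n)
              | omega
        _ < m ^ (n+1) * x + a * ∑ i ∈ Finset.range (n+1), m ^ i := by
            gcongr <;> first | exact ha | exact this
    exact absurd heq (hmono (Nat.lt_add_of_pos_right hk : N < N + k)).ne'
end
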